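/- Let a, D, λ, μ > 0, and set α := 4πλDa + μ and β := 4a²λ√(πD/α). Define f(s) := (4πλDa + 4a²λ√(πD/s)) · exp(−4πλDas − 8a²λ√(πDs)) for s > 0. Then the improper integral ∫₀^∞ f(s) e^{−μs} ds converges and equals 1 − μ/α + √π β (μ/α) e^{β²} erfc(β). Equivalently, the function t ↦ (1 − μ/α)(1 − exp(−2β√(αt) − αt)) + (√π β μ/α) e^{β²} (erf(β + √(αt)) − erf(β)) tends to 1 − μ/α + √π β (μ/α) e^{β²} erfc(β) as t → ∞. -/

import Mathlib

open MeasureTheory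

/-- The error function `erf x = (2/√π) ∫₀ˣ e^{-u²} du`. -/
noncomputable def erf (x : ℝ) : ℝ :=
  (2 / Real.sqrt Real.pi) * ∫ u in (0:ℝ)..x, Real.exp (-u ^ 2)

/-- The complementary error function. -/
noncomputable def erfc (x : ℝ) : ℝ := 1 - erf x

/-- The hitting rate
`f(s) = (4πλDa + 4a²λ√(πD/s)) · exp(−4πλDas − 8a²λ√(πDs))`. -/
noncomputable def hitRate (a D lam s : ℝ) : ℝ :=
  (4 * Real.pi * lam * D * a + 4 * a ^ 2 * lam * Real.sqrt (Real.pi * D / s)) *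
    Real.exp (-(4 * Real.pi * lam * D * a * s)
      - 8 * a ^ 2 * lam * Real.sqrt (Real.pi * D * s))

/-- Corollary 1: with `α = 4πλDa + μ` and `β = 4a²λ√(πD/α)`, the improper integral
`∫₀^∞ f(s)e^{−μs} ds` converges and equals `1 − μ/α + √π β (μ/α) e^{β²} erfc(β)`;
equivalently the closed-form hitting probability tends to this value as `t → ∞`. -/
theorem degradable_hitting_probability_infty (a D lam mu : ℝ) (ha : 0 < a) (hD : 0 < D)
    (hlam : 0 < lam) (hmu : 0 < mu) (α β : ℝ)
    (hα : α = 4 * Real.pi * lam * D * a + mu)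
    (hβ : β = 4 * a ^ 2 * lam * Real.sqrt (Real.pi * D / α)) :
    IntegrableOn (fun s : ℝ => hitRate a D lam s * Real.exp (-mu * s)) (Set.Ioi 0) ∧
    (∫ s in Set.Ioi (0:ℝ), hitRate a D lam s * Real.exp (-mu * s)) =
      1 - mu / α + Real.sqrt Real.pi * β * (mu / α) * Real.exp (β ^ 2) * erfc β ∧
    Filter.Tendsto
      (fun t : ℝ =>
        (1 - mu / α) * (1 - Real.exp (-(2 * β * Real.sqrt (α * t)) - α * t))
          + (Real.sqrt Real.pi * β * mu / α) * Real.exp (β ^ 2) *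
              (erf (β + Real.sqrt (α * t)) - erf β))
      Filter.atTop
      (nhds (1 - mu / α + Real.sqrt Real.pi * β * (mu / α) * Real.exp (β ^ 2) * erfc β)) := by
  have hπ := Real.pi_pos
  have hαpos : 0 < α := by rw [hα]; positivity
  have hβpos : 0 < β := by
    rw [hβ]
    have h0 : 0 < Real.pi * D / α := by positivity
    positivity
  have hsqrtπ : (0:ℝ) < Real.sqrt Real.pi := Real.sqrt_pos.2 hπ
  -- erf basics
  have hg : Continuous fun u : ℝ => Real.exp (-u ^ 2) := by continuity
  have herf_cont : Continuous erf := by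
    unfold erf
    exact continuous_const.mul (intervalIntegral.continuous_primitive
      (fun a b => hg.intervalIntegrable a b) 0)
  have herf_deriv : ∀ x : ℝ, HasDerivAt erf (2 / Real.sqrt Real.pi * Real.exp (-x ^ 2)) x := by
    intro x
    unfold erf
    exact (intervalIntegral.integral_hasDerivAt_right (hg.intervalIntegrable 0 x)
      (hg.stronglyMeasurableAtFilter _ _) hg.continuousAt).const_mul _
  have herf_lim : Filter.Tendsto erf Filter.atTop (nhds 1) := by
    have hint : IntegrableOn (fun u : ℝ => Real.exp (-u ^ 2)) (Set.Ioi 0) := by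
      simpa using (integrable_exp_neg_mul_sq one_pos).integrableOn
    have h1 : Filter.Tendsto (fun x : ℝ => ∫ u in (0:ℝ)..x, Real.exp (-u ^ 2))
        Filter.atTop (nhds (∫ u in Set.Ioi (0:ℝ), Real.exp (-u ^ 2))) :=
      intervalIntegral_tendsto_integral_Ioi 0 hint Filter.tendsto_id
    have h2 : (∫ u in Set.Ioi (0:ℝ), Real.exp (-u ^ 2)) = Real.sqrt Real.pi / 2 := by
      simpa using integral_gaussian_Ioi 1
    have := h1.const_mul (2 / Real.sqrt Real.pi)
    rw [h2] at this
    unfold erf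
    convert this using 2
    field_simp
  set G : ℝ → ℝ := fun t : ℝ =>
      (1 - mu / α) * (1 - Real.exp (-(2 * β * Real.sqrt (α * t)) - α * t))
        + (Real.sqrt Real.pi * β * mu / α) * Real.exp (β ^ 2) *
            (erf (β + Real.sqrt (α * t)) - erf β) with hGdef
  set L : ℝ := 1 - mu / α + Real.sqrt Real.pi * β * (mu / α) * Real.exp (β ^ 2) * erfc β with hLdef
  -- limit
  have hsq : Filter.Tendsto Real.sqrt Filter.atTop Filter.atTop := by
    apply Filter.tendsto_atTop_atTop.2
    intro b
    refine ⟨(max 0 b) ^ 2, fun x hx => ?_⟩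
    calc b ≤ max 0 b := le_max_right _ _
    _ = Real.sqrt ((max 0 b) ^ 2) := (Real.sqrt_sq (le_max_left _ _)).symm
    _ ≤ Real.sqrt x := Real.sqrt_le_sqrt hx
  have hlin : Filter.Tendsto (fun t : ℝ => α * t) Filter.atTop Filter.atTop :=
    Filter.Tendsto.const_mul_atTop hαpos Filter.tendsto_id
  have hsqrt_top : Filter.Tendsto (fun t : ℝ => Real.sqrt (α * t)) Filter.atTop Filter.atTop :=
    hsq.comp hlin
  have hexp0 : Filter.Tendsto (fun t : ℝ => Real.exp (-(2 * β * Real.sqrt (α * t)) - α * t))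
      Filter.atTop (nhds 0) := by
    have h3 : Filter.Tendsto (fun t : ℝ => -(2 * β * Real.sqrt (α * t)) - α * t)
        Filter.atTop Filter.atBot := by
      have ha1 : Filter.Tendsto (fun t : ℝ => -(2 * β * Real.sqrt (α * t)))
          Filter.atTop Filter.atBot :=
        Filter.tendsto_neg_atTop_atBot.comp
          (Filter.Tendsto.const_mul_atTop (by positivity) hsqrt_top)
      have ha2 : Filter.Tendsto (fun t : ℝ => -(α * t)) Filter.atTop Filter.atBot :=
        Filter.tendsto_neg_atTop_atBot.comp hlin
      have := Filter.Tendsto.atBot_add_atBot ha1 ha2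
      simpa [sub_eq_add_neg] using this
    exact Real.tendsto_exp_atBot.comp h3
  have herf_lim2 : Filter.Tendsto (fun t : ℝ => erf (β + Real.sqrt (α * t)))
      Filter.atTop (nhds 1) :=
    herf_lim.comp (Filter.tendsto_atTop_add_const_left _ β hsqrt_top)
  have hGlim : Filter.Tendsto G Filter.atTop (nhds L) := by
    have h := (((tendsto_const_nhds (x := (1:ℝ))).sub hexp0).const_mul (1 - mu / α)).add
      (((herf_lim2.sub (tendsto_const_nhds (x := erf β))).const_mul
        (Real.sqrt Real.pi * β * mu / α * Real.exp (β ^ 2))))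
    have heq : L = (1 - mu / α) * (1 - 0)
        + Real.sqrt Real.pi * β * mu / α * Real.exp (β ^ 2) * (1 - erf β) := by
      rw [hLdef]; unfold erfc; ring
    rw [heq]
    exact h
  -- derivative
  have hderiv : ∀ s ∈ Set.Ioi (0:ℝ), HasDerivAt G (hitRate a D lam s * Real.exp (-mu * s)) s := by
    intro s hs
    rw [Set.mem_Ioi] at hs
    have hαs : 0 < α * s := by positivity
    set r : ℝ := Real.sqrt (α * s) with hrdef
    have hrpos : 0 < r := Real.sqrt_pos.2 hαs
    have hr2 : r ^ 2 = α * s := Real.sq_sqrt hαs.le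
    have hlin' : HasDerivAt (fun t : ℝ => α * t) α s := by
      simpa using (hasDerivAt_id s).const_mul α
    have hsr : HasDerivAt (fun t : ℝ => Real.sqrt (α * t)) (α / (2 * r)) s := by
      have := (Real.hasDerivAt_sqrt hαs.ne').comp s hlin'
      refine this.congr_deriv ?_
      rw [hrdef]
      ring
    have hE : HasDerivAt (fun t : ℝ => -(2 * β * Real.sqrt (α * t)) - α * t)
        (-(2 * β * (α / (2 * r))) - α) s :=
      ((hsr.const_mul (2 * β)).neg).sub hlin'
    have hexp : HasDerivAt (fun t : ℝ => Real.exp (-(2 * β * Real.sqrt (α * t)) - α * t))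
        (Real.exp (-(2 * β * r) - α * s) * (-(2 * β * (α / (2 * r))) - α)) s := hE.exp
    have herfp : HasDerivAt (fun t : ℝ => erf (β + Real.sqrt (α * t)))
        (2 / Real.sqrt Real.pi * Real.exp (-(β + r) ^ 2) * (α / (2 * r))) s := by
      have := (herf_deriv (β + r)).comp s ((hasDerivAt_const s β).add hsr)
      refine this.congr_deriv ?_
      ring
    have hG' : HasDerivAt G
        ((1 - mu / α) * (0 - Real.exp (-(2 * β * r) - α * s) * (-(2 * β * (α / (2 * r))) - α))
          + Real.sqrt Real.pi * β * mu / α * Real.exp (β ^ 2) *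
              (2 / Real.sqrt Real.pi * Real.exp (-(β + r) ^ 2) * (α / (2 * r)) - 0)) s := by
      exact (((hasDerivAt_const s 1).sub hexp).const_mul (1 - mu / α)).add
        ((herfp.sub (hasDerivAt_const s (erf β))).const_mul
          (Real.sqrt Real.pi * β * mu / α * Real.exp (β ^ 2)))
    convert hG' using 1
    -- algebraic identity
    have hsqrt1 : Real.sqrt (Real.pi * D * s) = Real.sqrt (Real.pi * D / α) * r := by
      rw [hrdef, ← Real.sqrt_mul (by positivity : (0:ℝ) ≤ Real.pi * D / α)]
      congr 1
      field_simp
    have hsqrt2 : Real.sqrt (Real.pi * D / s) * r = Real.sqrt (Real.pi * D / α) * α := by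
      have h1 : Real.sqrt (Real.pi * D / s) * r = Real.sqrt (Real.pi * D * α) := by
        rw [hrdef, ← Real.sqrt_mul (by positivity : (0:ℝ) ≤ Real.pi * D / s)]
        congr 1
        field_simp
      have h2 : Real.sqrt (Real.pi * D / α) * α = Real.sqrt (Real.pi * D * α) := by
        nth_rewrite 2 [(Real.sqrt_sq hαpos.le).symm]
        rw [← Real.sqrt_mul (by positivity : (0:ℝ) ≤ Real.pi * D / α)]
        congr 1
        field_simp
      rw [h1, h2]
    have hE3 : Real.exp (-(β + r) ^ 2) =
        Real.exp (-(2 * β * r) - α * s) / Real.exp (β ^ 2) := by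
      rw [eq_div_iff (Real.exp_ne_zero _), ← Real.exp_add]
      congr 1
      linear_combination -hr2
    have hXeq : Real.exp (-(4 * Real.pi * lam * D * a * s)
        - 8 * a ^ 2 * lam * Real.sqrt (Real.pi * D * s)) * Real.exp (-mu * s) =
        Real.exp (-(2 * β * r) - α * s) := by
      rw [← Real.exp_add]
      congr 1
      rw [hsqrt1, hβ, hα]
      ring
    have hcoef : 4 * a ^ 2 * lam * Real.sqrt (Real.pi * D / s) = β * α / r := by
      rw [eq_div_iff hrpos.ne', hβ]
      linear_combination (4 * a ^ 2 * lam) * hsqrt2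
    unfold hitRate
    rw [mul_assoc, hXeq, hcoef, hE3, hα]
    field_simp
    ring
  -- nonnegativity
  have hnonneg : ∀ s ∈ Set.Ioi (0:ℝ), 0 ≤ hitRate a D lam s * Real.exp (-mu * s) := by
    intro s _
    unfold hitRate
    positivity
  -- continuity at 0
  have hsc : Continuous fun t : ℝ => Real.sqrt (α * t) :=
    Real.continuous_sqrt.comp (continuous_const.mul continuous_id)
  have hGc : Continuous G := by
    rw [hGdef]
    apply Continuous.add
    · exact continuous_const.mul (continuous_const.sub
        (Real.continuous_exp.comp ((((continuous_const (y := 2 * β)).mul hsc).neg).sub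
          (continuous_const.mul continuous_id))))
    · exact continuous_const.mul
        ((herf_cont.comp (continuous_const.add hsc)).sub continuous_const)
  have hcont0 : ContinuousWithinAt G (Set.Ici 0) 0 := hGc.continuousWithinAt
  have hG0 : G 0 = 0 := by
    rw [hGdef]
    simp
  have hint : IntegrableOn (fun s : ℝ => hitRate a D lam s * Real.exp (-mu * s)) (Set.Ioi 0) :=
    integrableOn_Ioi_deriv_of_nonneg hcont0 hderiv hnonneg hGlim
  refine ⟨hint, ?_, hGlim⟩
  have hval := integral_Ioi_of_hasDerivAt_of_tendsto hcont0 hderiv hint hGlim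
  rw [hval, hG0, sub_zero]
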